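/- Let m ≥ 1 and let R̂ be a positive definite m × m real matrix. Then there exists a constant C > 0 such that for all b = (b_1,…,b_m) ∈ ℝ^m, writing b_min = min_{1 ≤ i ≤ m} b_i: ( ∫_{∏_{i=1}^m (−∞, b_i)} ‖x‖₂² exp(−½ xᵀ R̂^{−1} x) dx ) / ( ∫_{∏_{i=1}^m (−∞, b_i)} exp(−½ xᵀ R̂^{−1} x) dx ) ≤ C (1 + b_min²)^{m+1}. -/

import Mathlib

open MeasureTheory Real Set Filter Matrix
noncomputable section

variable {m : ℕ}

-- abbreviations
def qf (A : Matrix (Fin m) (Fin m) ℝ) (x : Fin m → ℝ) : ℝ := x ⬝ᵥ (A *ᵥ x)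
def en (x : Fin m → ℝ) : ℝ := ∑ i, (x i)^2

lemma en_nonneg (x : Fin m → ℝ) : 0 ≤ en x := Finset.sum_nonneg fun i _ => sq_nonneg _

lemma en_coord_le (x : Fin m → ℝ) (i : Fin m) : (x i)^2 ≤ en x :=
  Finset.single_le_sum (fun j _ => sq_nonneg (x j)) (Finset.mem_univ i)

lemma qf_expand (A : Matrix (Fin m) (Fin m) ℝ) (hA : A.IsHermitian) (x y : Fin m → ℝ) :
    qf A (x + y) = qf A x + 2 * (x ⬝ᵥ (A *ᵥ y)) + qf A y := by
  have hsymm : y ⬝ᵥ (A *ᵥ x) = x ⬝ᵥ (A *ᵥ y) := by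
    rw [Matrix.dotProduct_mulVec, ← Matrix.mulVec_transpose]
    rw [show Aᵀ = A from hA]
    exact dotProduct_comm _ _
  simp only [qf, Matrix.mulVec_add, dotProduct_add, add_dotProduct]
  ring_nf
  rw [hsymm]; ring

lemma qf_smul (A : Matrix (Fin m) (Fin m) ℝ) (s : ℝ) (x : Fin m → ℝ) :
    qf A (s • x) = s^2 * qf A x := by
  simp only [qf, Matrix.mulVec_smul, dotProduct_smul, smul_dotProduct,
    smul_eq_mul]
  ring

def normS (A : Matrix (Fin m) (Fin m) ℝ) : ℝ := ∑ i, ∑ j, |A i j|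

lemma normS_nonneg (A : Matrix (Fin m) (Fin m) ℝ) : 0 ≤ normS A :=
  Finset.sum_nonneg fun i _ => Finset.sum_nonneg fun j _ => abs_nonneg _

lemma dot_mulVec_le (A : Matrix (Fin m) (Fin m) ℝ) (x y : Fin m → ℝ) (a c : ℝ)
    (hx : ∀ i, |x i| ≤ a) (hy : ∀ j, |y j| ≤ c) (ha : 0 ≤ a) :
    x ⬝ᵥ (A *ᵥ y) ≤ normS A * a * c := by
  have h : x ⬝ᵥ (A *ᵥ y) = ∑ i, ∑ j, x i * (A i j * y j) := by
    simp [dotProduct, Matrix.mulVec, Finset.mul_sum]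
  rw [h]
  calc ∑ i, ∑ j, x i * (A i j * y j) ≤ ∑ i, ∑ j, |A i j| * (a * c) := by
        apply Finset.sum_le_sum; intro i _
        apply Finset.sum_le_sum; intro j _
        calc x i * (A i j * y j) ≤ |x i * (A i j * y j)| := le_abs_self _
          _ = |x i| * (|A i j| * |y j|) := by rw [abs_mul, abs_mul]
          _ ≤ a * (|A i j| * c) := by
              apply mul_le_mul (hx i) (mul_le_mul_of_nonneg_left (hy j) (abs_nonneg _))
                (by positivity) ha
          _ = |A i j| * (a * c) := by ring
    _ = normS A * a * c := by
        simp [normS, ← Finset.sum_mul]; ring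

lemma qf_le (A : Matrix (Fin m) (Fin m) ℝ) (x : Fin m → ℝ) :
    qf A x ≤ normS A * en x := by
  have h1 : ∀ i, |x i| ≤ Real.sqrt (en x) := by
    intro i
    exact Real.abs_le_sqrt (en_coord_le x i)
  have := dot_mulVec_le A x x (Real.sqrt (en x)) (Real.sqrt (en x)) h1 h1 (Real.sqrt_nonneg _)
  calc qf A x ≤ normS A * Real.sqrt (en x) * Real.sqrt (en x) := this
    _ = normS A * en x := by
        rw [mul_assoc, Real.mul_self_sqrt (en_nonneg x)]

lemma qf_nonneg {A : Matrix (Fin m) (Fin m) ℝ} (hA : A.PosDef) (x : Fin m → ℝ) :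
    0 ≤ qf A x := by
  have := hA.posSemidef.dotProduct_mulVec_nonneg x; rw [star_trivial] at this; exact this

lemma qf_lower {A : Matrix (Fin m) (Fin m) ℝ} (hA : A.PosDef) (x : Fin m → ℝ) :
    en x / (normS A⁻¹ + 1) ≤ qf A x := by
  set S := normS A⁻¹ with hS
  have hS0 : 0 ≤ S := normS_nonneg _
  have hM : (0:ℝ) < S + 1 := by linarith
  set z := A⁻¹ *ᵥ x with hz
  have hAz : A *ᵥ z = x := by
    rw [hz, Matrix.mulVec_mulVec, Matrix.mul_nonsing_inv A (isUnit_iff_ne_zero.2 hA.det_pos.ne'),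
      Matrix.one_mulVec]
  have hcross : x ⬝ᵥ (A *ᵥ z) = en x := by
    rw [hAz]; simp [dotProduct, en, pow_two]
  have hqz : qf A z = x ⬝ᵥ (A⁻¹ *ᵥ x) := by
    rw [qf, hAz, dotProduct_comm]
  have hinv : x ⬝ᵥ (A⁻¹ *ᵥ x) ≤ S * en x := qf_le A⁻¹ x
  have hpos := qf_nonneg hA (x + (-(1/(S+1))) • z)
  rw [qf_expand A hA.isHermitian x _, Matrix.mulVec_smul, dotProduct_smul,
    qf_smul] at hpos
  rw [smul_eq_mul, hcross, hqz] at hpos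
  have h1 : (-(1/(S+1)))^2 * (x ⬝ᵥ (A⁻¹ *ᵥ x)) ≤ (1/(S+1)) * en x := by
    have : (-(1/(S+1)))^2 * (x ⬝ᵥ (A⁻¹ *ᵥ x)) ≤ (1/(S+1))^2 * (S * en x) := by
      rw [neg_pow]; ring_nf
      nlinarith [sq_nonneg (1/(S+1)), en_nonneg x]
    refine this.trans ?_
    rw [div_pow, one_pow]
    rw [div_mul_eq_mul_div, div_le_iff₀ (by positivity)]
    have hen := en_nonneg x
    rw [one_div, inv_mul_eq_div, div_mul_eq_mul_div, le_div_iff₀ hM]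
    nlinarith
  have : 0 ≤ qf A x - (1/(S+1)) * en x := by nlinarith
  rw [div_eq_inv_mul, ← one_div]
  linarith

lemma qf_continuous (A : Matrix (Fin m) (Fin m) ℝ) : Continuous (qf A) := by
  unfold qf dotProduct Matrix.mulVec
  exact continuous_finset_sum _ fun i _ => (continuous_apply i).mul
    (continuous_finset_sum _ fun j _ => continuous_const.mul (continuous_apply j))

lemma exists_box_min {A : Matrix (Fin m) (Fin m) ℝ} (hA : A.PosDef) (b : Fin m → ℝ) :
    ∃ xs : Fin m → ℝ, (∀ i, xs i ≤ b i) ∧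
      ∀ z : Fin m → ℝ, (∀ i, z i ≤ b i) → qf A xs ≤ qf A z := by
  classical
  set c : Fin m → ℝ := fun i => min (b i) 0 with hc
  have hcbox : ∀ i, c i ≤ b i := fun i => min_le_left _ _
  set lam : ℝ := (normS A⁻¹ + 1)⁻¹ with hlam
  have hlam0 : 0 < lam := by
    rw [hlam]; have := normS_nonneg A⁻¹; positivity
  have hlow : ∀ x, lam * en x ≤ qf A x := by
    intro x
    have := qf_lower hA x
    rwa [div_eq_inv_mul, ← hlam] at this
  set K : Set (Fin m → ℝ) := {x | (∀ i, x i ≤ b i) ∧ qf A x ≤ qf A c} with hK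
  have hKne : K.Nonempty := ⟨c, hcbox, le_rfl⟩
  have hKclosed : IsClosed K := by
    have h1 : IsClosed {x : Fin m → ℝ | ∀ i, x i ≤ b i} := by
      have : {x : Fin m → ℝ | ∀ i, x i ≤ b i} = ⋂ i, {x | x i ≤ b i} := by
        ext x; simp
      rw [this]
      exact isClosed_iInter fun i => isClosed_le (continuous_apply i) continuous_const
    exact h1.inter (isClosed_le (qf_continuous A) continuous_const)
  have hKbdd : Bornology.IsBounded K := by
    set r : ℝ := Real.sqrt (qf A c / lam) with hr
    apply Bornology.IsBounded.subset (Metric.isBounded_closedBall (x := (0 : Fin m → ℝ)) (r := r))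
    intro x hx
    rw [Metric.mem_closedBall, dist_zero_right]
    rw [pi_norm_le_iff_of_nonneg (Real.sqrt_nonneg _)]
    intro i
    rw [Real.norm_eq_abs]
    apply Real.abs_le_sqrt
    rw [le_div_iff₀ hlam0, mul_comm]
    calc lam * (x i)^2 ≤ lam * en x :=
          mul_le_mul_of_nonneg_left (en_coord_le x i) hlam0.le
      _ ≤ qf A x := hlow x
      _ ≤ qf A c := hx.2
  have hKcompact : IsCompact K := Metric.isCompact_of_isClosed_isBounded hKclosed hKbdd
  obtain ⟨xs, hxsK, hxsmin⟩ := hKcompact.exists_isMinOn hKne ((qf_continuous A).continuousOn)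
  rw [isMinOn_iff] at hxsmin
  refine ⟨xs, hxsK.1, fun z hz => ?_⟩
  by_cases hzc : qf A z ≤ qf A c
  · exact hxsmin z ⟨hz, hzc⟩
  · exact (hxsmin c ⟨hcbox, le_rfl⟩).trans (le_of_not_ge hzc)

lemma cross_nonneg {A : Matrix (Fin m) (Fin m) ℝ} (hA : A.PosDef) {b xs : Fin m → ℝ}
    (hxs : ∀ i, xs i ≤ b i)
    (hmin : ∀ z : Fin m → ℝ, (∀ i, z i ≤ b i) → qf A xs ≤ qf A z)
    {z : Fin m → ℝ} (hz : ∀ i, z i ≤ b i) :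
    0 ≤ xs ⬝ᵥ (A *ᵥ (z - xs)) := by
  set w : Fin m → ℝ := z - xs with hw
  set B : ℝ := xs ⬝ᵥ (A *ᵥ w) with hB
  have key : ∀ s : ℝ, 0 < s → s ≤ 1 → 0 ≤ 2 * B + s * qf A w := by
    intro s hs0 hs1
    have hmem : ∀ i, (xs + s • w) i ≤ b i := by
      intro i
      have : (xs + s • w) i = (1 - s) * xs i + s * z i := by
        simp [hw]; ring
      rw [this]
      calc (1 - s) * xs i + s * z i ≤ (1 - s) * b i + s * b i := by
            apply add_le_add
            · exact mul_le_mul_of_nonneg_left (hxs i) (by linarith)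
            · exact mul_le_mul_of_nonneg_left (hz i) hs0.le
        _ = b i := by ring
    have h1 := hmin _ hmem
    rw [qf_expand A hA.isHermitian, Matrix.mulVec_smul, dotProduct_smul, qf_smul,
      smul_eq_mul, ← hB] at h1
    nlinarith
  by_contra hneg
  push_neg at hneg
  have hqw : 0 ≤ qf A w := qf_nonneg hA w
  rcases eq_or_lt_of_le hqw with h0 | hpos
  · have := key 1 one_pos le_rfl
    rw [← h0] at this; linarith
  · set s : ℝ := min 1 (-B / qf A w) with hs
    have hs0 : 0 < s := lt_min one_pos (div_pos (neg_pos.2 hneg) hpos)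
    have hs1 : s ≤ 1 := min_le_left _ _
    have := key s hs0 hs1
    rw [hs] at this
    rcases min_cases 1 (-B / qf A w) with ⟨he, hle⟩ | ⟨he, hlt⟩
    · rw [he] at this
      rw [le_div_iff₀ hpos] at hle
      linarith
    · rw [he] at this
      rw [div_mul_eq_mul_div, mul_comm, mul_div_assoc, div_self hpos.ne', mul_one] at this
      linarith

lemma exp_en_prod (c : ℝ) (x : Fin m → ℝ) :
    Real.exp (-c * en x) = ∏ i, Real.exp (-c * (x i)^2) := by
  rw [← Real.exp_sum]
  congr 1
  rw [en, Finset.mul_sum]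

lemma integrable_exp_neg_en {c : ℝ} (hc : 0 < c) :
    Integrable (fun x : Fin m → ℝ => Real.exp (-c * en x)) := by
  simp only [exp_en_prod]
  exact Integrable.fintype_prod fun i => integrable_exp_neg_mul_sq hc

lemma integrable_en_mul_exp_neg_en {c : ℝ} (hc : 0 < c) :
    Integrable (fun x : Fin m → ℝ => en x * Real.exp (-c * en x)) := by
  have h : (fun x : Fin m → ℝ => en x * Real.exp (-c * en x))
      = fun x => ∑ j, ∏ i, (if i = j then (fun t : ℝ => t^2 * Real.exp (-c * t^2)) (x i)
          else Real.exp (-c * (x i)^2)) := by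
    funext x
    have hprod : ∀ j : Fin m, ∏ i, (if i = j then (fun t : ℝ => t^2 * Real.exp (-c * t^2)) (x i)
        else Real.exp (-c * (x i)^2)) = (x j)^2 * Real.exp (-c * en x) := by
      intro j
      set F : Fin m → ℝ := fun i => (if i = j then (x i)^2 * Real.exp (-c * (x i)^2)
          else Real.exp (-c * (x i)^2)) with hF
      have h1 : ∏ i, F i = F j * ∏ i ∈ Finset.univ.erase j, F i :=
        (Finset.mul_prod_erase Finset.univ F (Finset.mem_univ j)).symm
      have h2 : ∏ i ∈ Finset.univ.erase j, F i
          = ∏ i ∈ Finset.univ.erase j, Real.exp (-c * (x i)^2) := by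
        apply Finset.prod_congr rfl
        intro i hi
        rw [hF]
        simp [Finset.ne_of_mem_erase hi]
      have h3 : Real.exp (-c * (x j)^2) * ∏ i ∈ Finset.univ.erase j, Real.exp (-c * (x i)^2)
          = ∏ i, Real.exp (-c * (x i)^2) :=
        Finset.mul_prod_erase Finset.univ (fun i => Real.exp (-c * (x i)^2)) (Finset.mem_univ j)
      have h4 : F j = (x j)^2 * Real.exp (-c * (x j)^2) := by rw [hF]; simp
      rw [h1, h2, h4, exp_en_prod, ← h3]
      ring
    simp only [hprod]
    rw [← Finset.sum_mul, en]
  rw [h]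
  apply integrable_finset_sum
  intro j _
  apply Integrable.fintype_prod (f := fun i t =>
    (if i = j then t^2 * Real.exp (-c * t^2) else Real.exp (-c * t^2)))
  intro i
  by_cases hij : i = j
  · simp only [hij, if_pos rfl]
    have := integrable_rpow_mul_exp_neg_mul_sq hc (s := 2) (by norm_num)
    simpa [Real.rpow_natCast] using this
  · simp only [if_neg hij]
    exact integrable_exp_neg_mul_sq hc

lemma en_add_le (u v : Fin m → ℝ) : en (u + v) ≤ 2 * en u + 2 * en v := by
  have : ∀ i, ((u + v) i)^2 ≤ 2 * (u i)^2 + 2 * (v i)^2 := by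
    intro i
    have : (u i + v i)^2 ≤ 2 * (u i)^2 + 2 * (v i)^2 := by nlinarith [sq_nonneg (u i - v i)]
    simpa using this
  calc en (u + v) ≤ ∑ i, (2 * (u i)^2 + 2 * (v i)^2) := Finset.sum_le_sum fun i _ => this i
    _ = 2 * en u + 2 * en v := by rw [Finset.sum_add_distrib, ← Finset.mul_sum, ← Finset.mul_sum]; rfl

lemma en_continuous : Continuous (en (m := m)) :=
  continuous_finset_sum _ fun i _ => (continuous_apply i).pow 2

lemma arith1 (J0 J2 K1 T enxs β : ℝ) (hJ00 : 0 ≤ J0) (hJ20 : 0 ≤ J2) (hK10 : 0 ≤ K1)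
    (hT : T = 1 + β^2) (henxs : enxs ≤ K1*β^2) (hen0 : 0 ≤ enxs) :
    2*J2 + 2*enxs*J0 ≤ (1 + 2*J2 + 2*K1*J0) * T := by
  subst hT
  nlinarith [mul_nonneg (sub_nonneg.2 henxs) hJ00, mul_nonneg hJ20 (sq_nonneg β),
    mul_nonneg (mul_nonneg hK10 hJ00) (sq_nonneg β), sq_nonneg β]

lemma arith2 (X c4 K1 T β : ℝ) (hX0 : 0 ≤ X) (hX2 : X^2 ≤ K1*β^2)
    (hc4 : c4 = 2*(1+K1)) (hT : T = 1 + β^2) (hK10 : 0 ≤ K1) :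
    (1+X)^2 ≤ c4*T := by
  subst hT hc4
  nlinarith [sq_nonneg (1-X), sq_nonneg β, mul_nonneg hK10 (sq_nonneg β)]

set_option maxHeartbeats 2000000 in
/-- the Gaussian box moment-ratio bound used for the Hüsler–Reiss model.
For a positive definite `m × m` matrix `R̂` there is `C > 0` such that for all
`b ∈ ℝ^m`, with `b_min = min_i b_i`,
`(∫_{∏(−∞,bᵢ)} ‖x‖₂² e^{−½ xᵀ R̂⁻¹ x} dx) / (∫_{∏(−∞,bᵢ)} e^{−½ xᵀ R̂⁻¹ x} dx)
  ≤ C (1 + b_min²)^{m+1}`. -/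
theorem stmt17 {m : ℕ} (hm : 1 ≤ m) (R : Matrix (Fin m) (Fin m) ℝ) (hR : R.PosDef) :
    ∃ C : ℝ, 0 < C ∧ ∀ b : Fin m → ℝ,
      (∫ x in {x : Fin m → ℝ | ∀ i, x i < b i},
          (∑ i, (x i) ^ 2) * Real.exp (-(1/2) * (x ⬝ᵥ (R⁻¹ *ᵥ x))))
        / (∫ x in {x : Fin m → ℝ | ∀ i, x i < b i},
            Real.exp (-(1/2) * (x ⬝ᵥ (R⁻¹ *ᵥ x))))
        ≤ C * (1 + (⨅ i, b i) ^ 2) ^ (m + 1) := by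
  classical
  have : Nonempty (Fin m) := ⟨⟨0, hm⟩⟩
  set A := R⁻¹ with hAdef
  have hA : A.PosDef := hR.inv
  set S : ℝ := normS A with hSdef
  have hS0 : 0 ≤ S := normS_nonneg A
  set lamI : ℝ := normS A⁻¹ + 1 with hlamIdef
  have hlamI : 0 < lamI := by
    have := normS_nonneg A⁻¹; rw [hlamIdef]; linarith
  set lam : ℝ := lamI⁻¹ with hlamdef
  have hlam0 : 0 < lam := inv_pos.2 hlamI
  have hlamlamI : lam * lamI = 1 := inv_mul_cancel₀ hlamI.ne'
  have hlow : ∀ x : Fin m → ℝ, lam * en x ≤ qf A x := by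
    intro x
    have := qf_lower hA x
    rwa [div_eq_inv_mul, ← hlamIdef, ← hlamdef] at this
  have hup : ∀ x : Fin m → ℝ, qf A x ≤ S * en x := qf_le A
  set J0 : ℝ := ∫ x : Fin m → ℝ, Real.exp (-(lam/2) * en x) with hJ0def
  set J2 : ℝ := ∫ x : Fin m → ℝ, en x * Real.exp (-(lam/2) * en x) with hJ2def
  have hJ0int : Integrable (fun x : Fin m → ℝ => Real.exp (-(lam/2) * en x)) :=
    integrable_exp_neg_en (half_pos hlam0)
  have hJ2int : Integrable (fun x : Fin m → ℝ => en x * Real.exp (-(lam/2) * en x)) :=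
    integrable_en_mul_exp_neg_en (half_pos hlam0)
  have hJ00 : 0 ≤ J0 := integral_nonneg fun x => (Real.exp_pos _).le
  have hJ20 : 0 ≤ J2 := integral_nonneg fun x => mul_nonneg (en_nonneg x) (Real.exp_pos _).le
  set K1 : ℝ := lamI * S * m with hK1def
  have hK10 : 0 ≤ K1 := by positivity
  set cC : ℝ := Real.exp (-(2*S + S*m)/2) with hcCdef
  have hcC : 0 < cC := Real.exp_pos _
  set c4 : ℝ := 2*(1+K1) with hc4def
  have hc40 : 0 < c4 := by positivity
  set C : ℝ := (1 + 2*J2 + 2*K1*J0) * c4^m / cC with hCdef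
  have hC : 0 < C := by positivity
  refine ⟨C, hC, fun b => ?_⟩
  set β : ℝ := ⨅ i, b i with hβdef
  have hβle : ∀ i, β ≤ b i := fun i => ciInf_le (Set.Finite.bddBelow (Set.finite_range b)) i
  set T : ℝ := 1 + β^2 with hTdef
  have hT1 : 1 ≤ T := by linarith only [sq_nonneg β, hTdef]
  have hT0 : 0 < T := by linarith
  obtain ⟨xs, hxsbox, hxsmin⟩ := exists_box_min hA b
  set X : ℝ := Real.sqrt (en xs) with hXdef
  have hX0 : 0 ≤ X := Real.sqrt_nonneg _
  have hX2 : X^2 = en xs := Real.sq_sqrt (en_nonneg xs)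
  have hXc : ∀ i, |xs i| ≤ X := fun i => Real.abs_le_sqrt (en_coord_le xs i)
  set eps : ℝ := (1+X)⁻¹ with hepsdef
  have heps0 : 0 < eps := by positivity
  have hepsX : (1+X)*eps = 1 := mul_inv_cancel₀ (by positivity)
  have heps1 : eps ≤ 1 := by
    rw [hepsdef]
    rw [inv_le_one_iff₀]; right; linarith
  -- bound on en xs
  have henxs : en xs ≤ K1 * β^2 := by
    set c : Fin m → ℝ := fun i => min (b i) 0 with hcdef
    have hcbox : ∀ i, c i ≤ b i := fun i => min_le_left _ _
    have henc : en c ≤ m * β^2 := by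
      have h1 : ∀ i : Fin m, (c i)^2 ≤ β^2 := by
        intro i
        rcases le_total (b i) 0 with h | h
        · rw [hcdef]; simp only [min_eq_left h]
          nlinarith [hβle i]
        · rw [hcdef]; simp only [min_eq_right h]
          simpa using sq_nonneg β
      calc en c ≤ ∑ _i : Fin m, β^2 := Finset.sum_le_sum fun i _ => h1 i
        _ = m * β^2 := by rw [Finset.sum_const, Finset.card_univ, Fintype.card_fin,
              nsmul_eq_mul]
    have h2 : qf A xs ≤ qf A c := hxsmin c hcbox
    have h3 : qf A c ≤ S * en c := hup c
    have h4 : lam * en xs ≤ qf A xs := hlow xs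
    have h5 : en xs ≤ lamI * qf A xs := by
      have := mul_le_mul_of_nonneg_left h4 hlamI.le
      calc en xs = lamI * (lam * en xs) := by
            rw [← mul_assoc, mul_comm lamI lam, hlamlamI, one_mul]
        _ ≤ lamI * qf A xs := mul_le_mul_of_nonneg_left h4 hlamI.le
    calc en xs ≤ lamI * qf A xs := h5
      _ ≤ lamI * (S * (m * β^2)) := by
          apply mul_le_mul_of_nonneg_left _ hlamI.le
          exact h2.trans (h3.trans (mul_le_mul_of_nonneg_left henc hS0))
      _ = K1 * β^2 := by rw [hK1def]; ring
  -- the box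
  set box : Set (Fin m → ℝ) := {x | ∀ i, x i < b i} with hboxdef
  have hboxm : MeasurableSet box := by
    have : box = ⋂ i, {x : Fin m → ℝ | x i < b i} := by ext x; simp [hboxdef]
    rw [this]
    exact MeasurableSet.iInter fun i => measurableSet_lt (measurable_pi_apply i) measurable_const
  -- pointwise lower bound on qf over the box
  have hpoint : ∀ x ∈ box, qf A xs + lam * en (x - xs) ≤ qf A x := by
    intro x hx
    have hcross := cross_nonneg hA hxsbox hxsmin (z := x) (fun i => (hx i).le)
    have hexp : qf A x = qf A xs + 2*(xs ⬝ᵥ A *ᵥ (x - xs)) + qf A (x - xs) := by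
      have h := qf_expand A hA.isHermitian xs (x - xs)
      rwa [add_sub_cancel] at h
    have := hlow (x - xs)
    linarith
  -- numerator machinery
  set E : ℝ := Real.exp (-(qf A xs)/2) with hEdef
  have hE0 : 0 < E := Real.exp_pos _
  set h : (Fin m → ℝ) → ℝ :=
    fun z => (2*en z + 2*en xs) * (E * Real.exp (-(lam/2) * en z)) with hhdef
  have hhalt : h = fun z => (2*E) * (en z * Real.exp (-(lam/2)*en z))
      + (2*en xs*E) * Real.exp (-(lam/2)*en z) := by
    funext z; rw [hhdef]; ring
  have hh_int : Integrable h := by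
    rw [hhalt]
    exact (hJ2int.const_mul _).add (hJ0int.const_mul _)
  have hh_nonneg : ∀ z, 0 ≤ h z := fun z =>
    mul_nonneg (by linarith only [en_nonneg z, en_nonneg xs]) (by positivity)
  set P : ℝ := E * (2*J2 + 2*en xs*J0) with hPdef
  have hh_integral : ∫ z, h z = P := by
    rw [hhalt, integral_add ((hJ2int.const_mul _)) ((hJ0int.const_mul _)),
      integral_const_mul, integral_const_mul, ← hJ2def, ← hJ0def, hPdef]
    ring
  set g : (Fin m → ℝ) → ℝ := fun x => h (x - xs) with hgdef
  have hg_int : Integrable g := hh_int.comp_sub_right xs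
  have hg_integral : ∫ x, g x = P := by
    rw [hgdef, integral_sub_right_eq_self h xs]; exact hh_integral
  set f : (Fin m → ℝ) → ℝ := fun x => en x * Real.exp (-(1/2) * qf A x) with hfdef
  have hf_nonneg : ∀ x, 0 ≤ f x := fun x => mul_nonneg (en_nonneg x) (Real.exp_pos _).le
  have hfc : Continuous f :=
    en_continuous.mul ((continuous_const.mul (qf_continuous A)).rexp)
  have hexpbd : ∀ x ∈ box, Real.exp (-(1/2) * qf A x) ≤ E * Real.exp (-(lam/2)*en (x-xs)) := by
    intro x hx
    rw [hEdef, ← Real.exp_add]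
    apply Real.exp_le_exp.2
    linarith only [hpoint x hx]
  have hfg : ∀ x ∈ box, f x ≤ g x := by
    intro x hx
    have h1 : en x ≤ 2*en (x-xs) + 2*en xs := by
      have := en_add_le (x - xs) xs
      rwa [sub_add_cancel] at this
    calc f x = en x * Real.exp (-(1/2) * qf A x) := rfl
      _ ≤ (2*en (x-xs) + 2*en xs) * (E * Real.exp (-(lam/2)*en (x-xs))) :=
          mul_le_mul h1 (hexpbd x hx) (Real.exp_pos _).le
            (by linarith only [en_nonneg (x-xs), en_nonneg xs])
      _ = g x := rfl
  have hf_intOn : IntegrableOn f box := by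
    apply Integrable.mono' hg_int.integrableOn hfc.aestronglyMeasurable.restrict
    filter_upwards [ae_restrict_mem hboxm] with x hx
    rw [Real.norm_eq_abs, abs_of_nonneg (hf_nonneg x)]
    exact hfg x hx
  have hN : ∫ x in box, f x ≤ P := by
    calc ∫ x in box, f x ≤ ∫ x in box, g x :=
          setIntegral_mono_on hf_intOn hg_int.integrableOn hboxm hfg
      _ ≤ ∫ x, g x := setIntegral_le_integral hg_int
            (Filter.Eventually.of_forall fun x => hh_nonneg _)
      _ = P := hg_integral
  -- denominator machinery
  set φ : (Fin m → ℝ) → ℝ := fun x => Real.exp (-(1/2) * qf A x) with hφdef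
  have hφpos : ∀ x, 0 < φ x := fun x => Real.exp_pos _
  set gφ : (Fin m → ℝ) → ℝ := fun x => E * Real.exp (-(lam/2) * en (x - xs)) with hgφdef
  have hgφ_int : Integrable gφ :=
    ((integrable_exp_neg_en (half_pos hlam0)).comp_sub_right xs).const_mul E
  have hφc : Continuous φ := (continuous_const.mul (qf_continuous A)).rexp
  have hφ_intOn : IntegrableOn φ box := by
    apply Integrable.mono' hgφ_int.integrableOn hφc.aestronglyMeasurable.restrict
    filter_upwards [ae_restrict_mem hboxm] with x hx
    rw [Real.norm_eq_abs, abs_of_nonneg (hφpos x).le]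
    exact hexpbd x hx
  set Q : Set (Fin m → ℝ) := Set.pi univ (fun i => Ioo (xs i - eps) (xs i)) with hQdef
  have hQm : MeasurableSet Q := MeasurableSet.univ_pi fun i => measurableSet_Ioo
  have hQbox : Q ⊆ box := by
    intro x hx i
    exact lt_of_lt_of_le (hx i (mem_univ i)).2 (hxsbox i)
  have hQvol : volume Q = (ENNReal.ofReal eps)^m := by
    rw [hQdef, volume_pi_pi]
    simp [Real.volume_Ioo]
  have hQvol_ne : volume Q ≠ ⊤ := by
    rw [hQvol]; exact ENNReal.pow_ne_top ENNReal.ofReal_ne_top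
  have hQvol_toReal : (volume Q).toReal = eps^m := by
    rw [hQvol, ENNReal.toReal_pow, ENNReal.toReal_ofReal heps0.le]
  have hlower : ∀ x ∈ Q, E * cC ≤ φ x := by
    intro x hx
    have hyi : ∀ i, |x i - xs i| ≤ eps := by
      intro i
      have h1 := (hx i (mem_univ i)).1
      have h2 := (hx i (mem_univ i)).2
      rw [abs_le]
      constructor <;> [linarith; linarith]
    have hXeps : X * eps ≤ 1 := by
      calc X * eps ≤ (1+X) * eps :=
            mul_le_mul_of_nonneg_right (by linarith only []) heps0.le
        _ = 1 := hepsX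
    have hcross : xs ⬝ᵥ A *ᵥ (x - xs) ≤ S := by
      have h1 := dot_mulVec_le A xs (x - xs) X eps hXc hyi hX0
      calc xs ⬝ᵥ A *ᵥ (x - xs) ≤ normS A * X * eps := h1
        _ = S * (X * eps) := by rw [hSdef]; ring
        _ ≤ S * 1 := mul_le_mul_of_nonneg_left hXeps hS0
        _ = S := mul_one S
    have heny : en (x - xs) ≤ m * eps^2 := by
      have h1 : ∀ i, ((x - xs) i)^2 ≤ eps^2 := by
        intro i
        have := hyi i
        calc ((x - xs) i)^2 = |x i - xs i|^2 := by rw [sq_abs]; rfl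
          _ ≤ eps^2 := pow_le_pow_left₀ (abs_nonneg _) this 2
      calc en (x - xs) ≤ ∑ _i : Fin m, eps^2 := Finset.sum_le_sum fun i _ => h1 i
        _ = m * eps^2 := by
            rw [Finset.sum_const, Finset.card_univ, Fintype.card_fin, nsmul_eq_mul]
    have hqy : qf A (x - xs) ≤ S * m := by
      calc qf A (x - xs) ≤ S * en (x - xs) := hup _
        _ ≤ S * (m * eps^2) := mul_le_mul_of_nonneg_left heny hS0
        _ ≤ S * (m * 1) := by
            apply mul_le_mul_of_nonneg_left _ hS0
            apply mul_le_mul_of_nonneg_left _ (by positivity)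
            rw [pow_two]; exact mul_le_one₀ heps1 heps0.le heps1
        _ = S * m := by ring
    have hqx : qf A x ≤ qf A xs + 2*S + S*m := by
      have hexp := qf_expand A hA.isHermitian xs (x - xs)
      rw [add_sub_cancel] at hexp
      linarith only [hexp, hcross, hqy]
    rw [hφdef, hEdef, hcCdef, ← Real.exp_add]
    apply Real.exp_le_exp.2
    linarith only [hqx]
  have hD : E * cC * eps^m ≤ ∫ x in box, φ x := by
    calc E*cC*eps^m = (E*cC) * (volume Q).toReal := by rw [hQvol_toReal]
      _ ≤ ∫ x in Q, φ x :=
          setIntegral_ge_of_const_le_real hQm hQvol_ne hlower (hφ_intOn.mono_set hQbox)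
      _ ≤ ∫ x in box, φ x := setIntegral_mono_set hφ_intOn
            (Filter.Eventually.of_forall fun x => (hφpos x).le)
            (HasSubset.Subset.eventuallyLE hQbox)
  have hD0 : 0 < ∫ x in box, φ x := lt_of_lt_of_le (by positivity) hD
  -- key arithmetic
  have hT : T = 1 + β^2 := hTdef
  have key : P ≤ C * T^(m+1) * (E * cC * eps^m) := by
    have hCcC : C * cC = (1 + 2*J2 + 2*K1*J0) * c4^m := by
      rw [hCdef]; field_simp
    have hA1 : 2*J2 + 2*en xs*J0 ≤ (1 + 2*J2 + 2*K1*J0) * T :=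
      arith1 J0 J2 K1 T (en xs) β hJ00 hJ20 hK10 hT henxs (en_nonneg xs)
    have hB1 : (1+X)^m ≤ (c4*T)^m := by
      have hb2 : (1+X)^2 ≤ c4*T :=
        arith2 X c4 K1 T β hX0 (hX2 ▸ henxs) hc4def hT hK10
      calc (1+X)^m ≤ ((1+X)^2)^m := by
            rw [← pow_mul]
            exact pow_le_pow_right₀ (by linarith only [hX0]) (by omega)
        _ ≤ (c4*T)^m := pow_le_pow_left₀ (by positivity) hb2 m
    have hmain : 2*J2 + 2*en xs*J0 ≤ (1 + 2*J2 + 2*K1*J0) * c4^m * T^(m+1) * eps^m := by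
      have h0 : (2*J2 + 2*en xs*J0) = ((2*J2 + 2*en xs*J0) * (1+X)^m) * eps^m := by
        rw [mul_assoc (2*J2 + 2*en xs*J0) ((1+X)^m) (eps^m), ← mul_pow, hepsX,
          one_pow, mul_one]
      rw [h0]
      apply mul_le_mul_of_nonneg_right _ (pow_nonneg heps0.le m)
      have hen0 : 0 ≤ 2*J2 + 2*en xs*J0 := by
        linarith only [hJ20, mul_nonneg (en_nonneg xs) hJ00]
      calc (2*J2+2*en xs*J0) * (1+X)^m ≤ ((1+2*J2+2*K1*J0)*T) * ((c4*T)^m) :=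
            mul_le_mul hA1 hB1 (pow_nonneg (by linarith only [hX0]) m) (by positivity)
        _ = ((1+2*J2+2*K1*J0)*T) * (c4^m * T^m) := by rw [mul_pow]
        _ = (1+2*J2+2*K1*J0) * c4^m * T^(m+1) := by rw [pow_succ]; ring
    calc P = E * (2*J2+2*en xs*J0) := hPdef
      _ ≤ E * ((1+2*J2+2*K1*J0)*c4^m*(T^(m+1)*eps^m)) := by
          apply mul_le_mul_of_nonneg_left _ hE0.le
          calc 2*J2+2*en xs*J0 ≤ (1 + 2*J2 + 2*K1*J0) * c4^m * T^(m+1) * eps^m := hmain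
            _ = (1+2*J2+2*K1*J0)*c4^m*(T^(m+1)*eps^m) := by ring
      _ = C*T^(m+1)*(E*cC*eps^m) := by rw [← hCcC]; ring
  -- conclusion
  show (∫ x in box, f x) / (∫ x in box, φ x) ≤ C * T^(m+1)
  rw [div_le_iff₀ hD0]
  calc ∫ x in box, f x ≤ P := hN
    _ ≤ C*T^(m+1)*(E*cC*eps^m) := key
    _ ≤ C*T^(m+1) * ∫ x in box, φ x :=
        mul_le_mul_of_nonneg_left hD (by positivity)

end
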